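/- (Proposition 1, stated entrywise.) Let (Ω, P) be a probability space, p ≥ 1, and let X, W : Ω → (Fin p → ℝ) be independent random vectors with square-integrable coordinates. Assume E[W_j] = 0 for all j, write Σ_{jk} = Cov(X_j, X_k) and Σ̂_{jk} = Cov(W_j, W_k), and let τ > 0. Define X⁽¹⁾ = X + τ·W and X⁽²⁾ = X − (1/τ)·W. Then for all coordinates j, k one has Cov(X⁽¹⁾_j, X⁽²⁾_k) = Σ_{jk} − Σ̂_{jk}. -/

import Mathlib

open MeasureTheory ProbabilityTheory

/-- Covariance of two real-valued random variables: `E[UV] - E[U]E[V]`. -/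
noncomputable def cov {Ω : Type*} [MeasurableSpace Ω] (P : Measure Ω) (U V : Ω → ℝ) : ℝ :=
  (∫ ω, U ω * V ω ∂P) - (∫ ω, U ω ∂P) * (∫ ω, V ω ∂P)

/-- Products of two `L²` functions are integrable (AM–GM bound). -/
lemma memLp_two_integrable_mul {Ω : Type*} [MeasurableSpace Ω] {P : Measure Ω}
    {f g : Ω → ℝ} (hf : MemLp f 2 P) (hg : MemLp g 2 P) :
    Integrable (fun ω => f ω * g ω) P := by
  refine Integrable.mono' (((hf.integrable_sq.add hg.integrable_sq)).div_const 2)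
    (hf.aestronglyMeasurable.mul hg.aestronglyMeasurable) ?_
  refine Filter.Eventually.of_forall fun ω => ?_
  have h := sq_nonneg (|f ω| - |g ω|)
  have h2 : |f ω * g ω| = |f ω| * |g ω| := abs_mul _ _
  simp only [Pi.add_apply]
  rw [Real.norm_eq_abs, h2]
  nlinarith [sq_abs (f ω), sq_abs (g ω)]

/-- Proposition 1, stated entrywise: fission with a plug-in noise covariance `Σ̂`
induces covariance `Σ - Σ̂` between the two fissioned parts. -/
theorem data_fission_plugin_covariance
    {Ω : Type*} [MeasurableSpace Ω] (P : Measure Ω) [IsProbabilityMeasure P]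
    (p : ℕ) (hp : 1 ≤ p) (X W : Ω → Fin p → ℝ)
    (hX : Measurable X) (hW : Measurable W)
    (hXW : IndepFun X W P)
    (hX2 : ∀ j, MemLp (fun ω => X ω j) 2 P)
    (hW2 : ∀ j, MemLp (fun ω => W ω j) 2 P)
    (hWmean : ∀ j, (∫ ω, W ω j ∂P) = 0)
    (Sig Sighat : Fin p → Fin p → ℝ)
    (hSig : ∀ j k, Sig j k = cov P (fun ω => X ω j) (fun ω => X ω k))
    (hSighat : ∀ j k, Sighat j k = cov P (fun ω => W ω j) (fun ω => W ω k))
    (τ : ℝ) (hτ : 0 < τ) :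
    ∀ j k, cov P (fun ω => X ω j + τ * W ω j) (fun ω => X ω k - (1 / τ) * W ω k)
      = Sig j k - Sighat j k := by
  intro j k
  have hXj := hX2 j; have hXk := hX2 k; have hWj := hW2 j; have hWk := hW2 k
  have iXj : Integrable (fun ω => X ω j) P := hXj.integrable one_le_two
  have iXk : Integrable (fun ω => X ω k) P := hXk.integrable one_le_two
  have iWj : Integrable (fun ω => W ω j) P := hWj.integrable one_le_two
  have iWk : Integrable (fun ω => W ω k) P := hWk.integrable one_le_two
  have iXX : Integrable (fun ω => X ω j * X ω k) P := memLp_two_integrable_mul hXj hXk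
  have iXW : Integrable (fun ω => X ω j * W ω k) P := memLp_two_integrable_mul hXj hWk
  have iWX : Integrable (fun ω => W ω j * X ω k) P := memLp_two_integrable_mul hWj hXk
  have iWW : Integrable (fun ω => W ω j * W ω k) P := memLp_two_integrable_mul hWj hWk
  have indXW : IndepFun (fun ω => X ω j) (fun ω => W ω k) P :=
    hXW.comp (measurable_pi_apply j) (measurable_pi_apply k)
  have indWX : IndepFun (fun ω => W ω j) (fun ω => X ω k) P :=
    hXW.symm.comp (measurable_pi_apply j) (measurable_pi_apply k)
  have eXW : (∫ ω, X ω j * W ω k ∂P) = 0 := by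
    have h : (∫ ω, X ω j * W ω k ∂P) = (∫ ω, X ω j ∂P) * ∫ ω, W ω k ∂P :=
      indXW.integral_mul_eq_mul_integral iXj.aestronglyMeasurable iWk.aestronglyMeasurable
    rw [h, hWmean k, mul_zero]
  have eWX : (∫ ω, W ω j * X ω k ∂P) = 0 := by
    have h : (∫ ω, W ω j * X ω k ∂P) = (∫ ω, W ω j ∂P) * ∫ ω, X ω k ∂P :=
      indWX.integral_mul_eq_mul_integral iWj.aestronglyMeasurable iXk.aestronglyMeasurable
    rw [h, hWmean j, zero_mul]
  have hτne : τ * (1/τ) = 1 := by field_simp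
  have iA : Integrable (fun ω => X ω j * X ω k - (1/τ) * (X ω j * W ω k)) P :=
    iXX.sub (iXW.const_mul _)
  have iB : Integrable (fun ω => X ω j * X ω k - (1/τ) * (X ω j * W ω k)
      + τ * (W ω j * X ω k)) P := iA.add (iWX.const_mul _)
  have I1 : (∫ ω, (X ω j + τ * W ω j) * (X ω k - (1 / τ) * W ω k) ∂P)
      = (∫ ω, X ω j * X ω k ∂P) - (∫ ω, W ω j * W ω k ∂P) := by
    have e : (fun ω => (X ω j + τ * W ω j) * (X ω k - (1 / τ) * W ω k))
        = fun ω => X ω j * X ω k - (1/τ) * (X ω j * W ω k) + τ * (W ω j * X ω k)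
          - W ω j * W ω k := by
      funext ω
      linear_combination (-(W ω j * W ω k)) * hτne
    rw [e, integral_sub iB iWW, integral_add iA (iWX.const_mul _),
      integral_sub iXX (iXW.const_mul _), integral_const_mul, integral_const_mul, eXW, eWX]
    ring
  have I2 : (∫ ω, (X ω j + τ * W ω j) ∂P) = ∫ ω, X ω j ∂P := by
    rw [integral_add iXj (iWj.const_mul _), integral_const_mul, hWmean j]; ring
  have I3 : (∫ ω, (X ω k - (1 / τ) * W ω k) ∂P) = ∫ ω, X ω k ∂P := by
    rw [integral_sub iXk (iWk.const_mul _), integral_const_mul, hWmean k]; ring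
  simp only [cov, hSig, hSighat, I1, I2, I3, hWmean]
  ring
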